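/- Strip maps transitions of translated program rules not involving f to valid transitions: if C^J ↦_rf D^J by a translated rule rf whose matched head constraints all have justification sets not containing f, then strip(f, C^J) ↦_rf strip(f, D^J) is also a valid transition with the same rule. -/
import Mathlib


variable {C J : Type*} [DecidableEq C] [DecidableEq J]

/-- Annotated constraints of CHR with justifications, including the reserved
`rem` and `kill` constraints. `user c F` is a (non-reserved) constraint `c`
annotated with justification set `F`; `rem c Fc F` remembers the removed
constraint `c^{Fc}` and is itself annotated with `F`; `kill f` requests
logical retraction of justification `f`. -/
inductive AC (C J : Type*) where
  | user : C → Finset J → AC C J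
  | rem : C → Finset J → Finset J → AC C J
  | kill : J → AC C J
deriving DecidableEq

/-- The kill rule: `kill(f) \ G^F ⇔ f ∈ F | true`, for non-reserved `G`. -/
def KillStep (S T : Multiset (AC C J)) : Prop :=
  ∃ (f : J) (c : C) (F : Finset J) (G : Multiset (AC C J)),
    f ∈ F ∧ S = AC.kill f ::ₘ AC.user c F ::ₘ G ∧ T = AC.kill f ::ₘ G

/-- The revive rule: `kill(f) \ rem(G^{F_c})^F ⇔ f ∈ F | G^{F_c}`. -/
def ReviveStep (S T : Multiset (AC C J)) : Prop :=
  ∃ (f : J) (c : C) (Fc F : Finset J) (G : Multiset (AC C J)),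
    f ∈ F ∧ S = AC.kill f ::ₘ AC.rem c Fc F ::ₘ G ∧
      T = AC.kill f ::ₘ AC.user c Fc ::ₘ G

/-- A state contains at most one `kill(f)` constraint per justification `f`. -/
def AtMostOneKill (S : Multiset (AC C J)) : Prop :=
  ∀ f : J, S.count (AC.kill f) ≤ 1

/-- The strip mapping on a single annotated constraint: non-reserved
constraints whose annotation contains `f` are deleted; a `rem` constraint
whose outer annotation contains `f` is unwrapped to the strip of the
remembered constraint; everything else is unchanged. -/
def stripOne (f : J) : AC C J → Multiset (AC C J)
  | AC.user c F => if f ∈ F then 0 else {AC.user c F}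
  | AC.rem c Fc F =>
      if f ∈ F then (if f ∈ Fc then 0 else {AC.user c Fc})
      else {AC.rem c Fc F}
  | AC.kill g => {AC.kill g}

/-- The strip mapping on states (multisets of annotated constraints). -/
def strip (f : J) (S : Multiset (AC C J)) : Multiset (AC C J) :=
  S.bind (stripOne f)

/-- A simpagation rule: kept head, removed head, guard and body (no built-in
constraints in the body, no reserved symbols in the head). -/
structure Rule (C : Type*) where
  kept : Multiset C
  removed : Multiset C
  guard : Prop
  body : Multiset C

/-- Transition with the translated rule `rf` of a program rule `r`: removed
constraints are remembered via `rem`, and all produced constraints are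
annotated with the union `F` of the head justification sets. -/
def JStep (r : Rule C) (S T : Multiset (AC C J)) : Prop :=
  r.guard ∧ ∃ (K R : Multiset (C × Finset J)) (G : Multiset (AC C J)),
    K.map Prod.fst = r.kept ∧ R.map Prod.fst = r.removed ∧
    S = K.map (fun p => AC.user p.1 p.2) +
        R.map (fun p => AC.user p.1 p.2) + G ∧
    T = K.map (fun p => AC.user p.1 p.2) +
        R.map (fun p => AC.rem p.1 p.2
          ((K.map Prod.snd).sup ∪ (R.map Prod.snd).sup)) +
        r.body.map (fun b => AC.user b
          ((K.map Prod.snd).sup ∪ (R.map Prod.snd).sup)) + G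


/-- Strip maps transitions of translated program rules not involving `f` to
valid transitions with the same rule: if the matched head constraints all
have justification sets not containing `f`, then stripping source and target
again yields a transition of the translated rule. -/
theorem strip_jstep_not_involving (r : Rule C) (f : J)
    (K R : Multiset (C × Finset J)) (G : Multiset (AC C J))
    (hg : r.guard)
    (hK : K.map Prod.fst = r.kept) (hR : R.map Prod.fst = r.removed)
    (hf : ∀ p ∈ K + R, f ∉ p.2) :
    JStep r
      (strip f (K.map (fun p => AC.user p.1 p.2) +
        R.map (fun p => AC.user p.1 p.2) + G))
      (strip f (K.map (fun p => AC.user p.1 p.2) +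
        R.map (fun p => AC.rem p.1 p.2
          ((K.map Prod.snd).sup ∪ (R.map Prod.snd).sup)) +
        r.body.map (fun b => AC.user b
          ((K.map Prod.snd).sup ∪ (R.map Prod.snd).sup)) + G)) := by

  have hfsup : f ∉ (K.map Prod.snd).sup ∪ (R.map Prod.snd).sup := by
    have key : ∀ (M : Multiset (C × Finset J)), (∀ p ∈ M, f ∉ p.2) →
        f ∉ (M.map Prod.snd).sup := by
      intro M
      induction M using Multiset.induction with
      | empty => simp
      | cons a s ih =>
        intro h
        simp only [Multiset.map_cons, Multiset.sup_cons, Finset.sup_eq_union, Finset.mem_union, not_or]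
        exact ⟨h a (Multiset.mem_cons_self a s),
          ih fun p hp => h p (Multiset.mem_cons_of_mem hp)⟩
    simp only [Finset.mem_union, not_or]
    exact ⟨key K fun p hp => hf p (Multiset.mem_add.2 (Or.inl hp)),
      key R fun p hp => hf p (Multiset.mem_add.2 (Or.inr hp))⟩
  have hmap : ∀ (M : Multiset (AC C J)), (∀ a ∈ M, stripOne f a = {a}) →
      strip f M = M := by
    intro M h
    rw [strip, Multiset.bind_congr h, Multiset.bind_singleton]; exact Multiset.map_id' M
  have hKs : strip f (K.map fun p => AC.user p.1 p.2) = K.map fun p => AC.user p.1 p.2 := by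
    apply hmap; intro a ha
    obtain ⟨p, hp, rfl⟩ := Multiset.mem_map.1 ha
    simp [stripOne, hf p (Multiset.mem_add.2 (Or.inl hp))]
  have hRs : strip f (R.map fun p => AC.user p.1 p.2) = R.map fun p => AC.user p.1 p.2 := by
    apply hmap; intro a ha
    obtain ⟨p, hp, rfl⟩ := Multiset.mem_map.1 ha
    simp [stripOne, hf p (Multiset.mem_add.2 (Or.inr hp))]
  have hRrem : strip f (R.map fun p => AC.rem p.1 p.2
      ((K.map Prod.snd).sup ∪ (R.map Prod.snd).sup)) =
      R.map fun p => AC.rem p.1 p.2 ((K.map Prod.snd).sup ∪ (R.map Prod.snd).sup) := by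
    apply hmap; intro a ha
    obtain ⟨p, hp, rfl⟩ := Multiset.mem_map.1 ha
    simp [stripOne, hfsup]
  have hbody : strip f (r.body.map fun b => AC.user b
      ((K.map Prod.snd).sup ∪ (R.map Prod.snd).sup)) =
      r.body.map fun b => AC.user b ((K.map Prod.snd).sup ∪ (R.map Prod.snd).sup) := by
    apply hmap; intro a ha
    obtain ⟨b, hb, rfl⟩ := Multiset.mem_map.1 ha
    simp [stripOne, hfsup]
  have hadd : ∀ (A B : Multiset (AC C J)), strip f (A + B) = strip f A + strip f B := by
    intro A B; simp [strip, Multiset.add_bind]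
  refine ⟨hg, K, R, strip f G, hK, hR, ?_, ?_⟩
  · rw [hadd, hadd, hKs, hRs]
  · rw [hadd, hadd, hadd, hKs, hRrem, hbody]
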